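/- Consider the assignment game on the bipartite graph with U = {u1, u2}, V = {v1, v2} and edges (u1,v1) of weight 70, (u1,v2) of weight 110, (u2,v2) of weight 100, where (u1,v1) and (u2,v2) form the maximum weight matching. The leximin core imputation assigns (u1,u2,v1,v2) = (40, 30, 30, 70) and the leximax core imputation assigns (55, 45, 15, 55); in particular the two imputations differ. -/

import Mathlib

open scoped Classical

/-- `M` is a matching in the bipartite graph with edge set `E`. -/
def IsMatching {U V : Type*} (E M : Finset (U × V)) : Prop :=
  M ⊆ E ∧ (∀ e ∈ M, ∀ e' ∈ M, e.1 = e'.1 → e = e') ∧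
    (∀ e ∈ M, ∀ e' ∈ M, e.2 = e'.2 → e = e')

/-- Total weight of a set of edges. -/
def matchWeight {U V : Type*} (w : U × V → ℚ) (M : Finset (U × V)) : ℚ :=
  ∑ e ∈ M, w e

/-- Maximum weight of a matching in `(E, w)`. -/
noncomputable def maxWeight {U V : Type*} [DecidableEq U] [DecidableEq V]
    (E : Finset (U × V)) (w : U × V → ℚ) : ℚ :=
  ((E.powerset).filter (fun M => IsMatching E M)).sup'
    ⟨∅, by simp [IsMatching]⟩ (matchWeight w)

/-- `M` is a maximum weight matching. -/
def IsMaxMatching {U V : Type*} [DecidableEq U] [DecidableEq V]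
    (E : Finset (U × V)) (w : U × V → ℚ) (M : Finset (U × V)) : Prop :=
  IsMatching E M ∧ matchWeight w M = maxWeight E w

/-- Core imputations of the assignment game (Shapley–Shubik characterization
as optimal dual solutions). -/
def InCore {U V : Type*} [Fintype U] [Fintype V] [DecidableEq U] [DecidableEq V]
    (E : Finset (U × V)) (w : U × V → ℚ) (u : U → ℚ) (v : V → ℚ) : Prop :=
  (∀ i, 0 ≤ u i) ∧ (∀ j, 0 ≤ v j) ∧ (∀ e ∈ E, w e ≤ u e.1 + v e.2) ∧
    (∑ i, u i) + (∑ j, v j) = maxWeight E w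

/-- A vertex (from either side) is matched in `M`. -/
def MatchedIn {U V : Type*} (M : Finset (U × V)) : U ⊕ V → Prop
  | Sum.inl i => ∃ j, (i, j) ∈ M
  | Sum.inr j => ∃ i, (i, j) ∈ M

/-- A vertex is essential if it is matched in every maximum weight matching. -/
def EssentialVertex {U V : Type*} [DecidableEq U] [DecidableEq V]
    (E : Finset (U × V)) (w : U × V → ℚ) (q : U ⊕ V) : Prop :=
  ∀ M, IsMaxMatching E w M → MatchedIn M q

/-- Profits of the essential vertices, sorted in increasing order. -/
noncomputable def profitListInc {U V : Type*} [Fintype U] [Fintype V]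
    [DecidableEq U] [DecidableEq V]
    (E : Finset (U × V)) (w : U × V → ℚ) (u : U → ℚ) (v : V → ℚ) : List ℚ :=
  ((Finset.univ.filter (fun q : U ⊕ V => EssentialVertex E w q)).val.map
    (Sum.elim u v)).sort (· ≤ ·)

/-- Profits of the essential vertices, sorted in decreasing order. -/
noncomputable def profitListDec {U V : Type*} [Fintype U] [Fintype V]
    [DecidableEq U] [DecidableEq V]
    (E : Finset (U × V)) (w : U × V → ℚ) (u : U → ℚ) (v : V → ℚ) : List ℚ :=
  (profitListInc E w u v).reverse

/-- `(u, v)` is the leximin core imputation: its increasing sorted list of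
profits of essential vertices is lexicographically largest over the core. -/
def IsLeximin {U V : Type*} [Fintype U] [Fintype V] [DecidableEq U] [DecidableEq V]
    (E : Finset (U × V)) (w : U × V → ℚ) (u : U → ℚ) (v : V → ℚ) : Prop :=
  InCore E w u v ∧ ∀ u' v', InCore E w u' v' →
    profitListInc E w u' v' = profitListInc E w u v ∨
      List.Lex (· < ·) (profitListInc E w u' v') (profitListInc E w u v)

/-- `(u, v)` is the leximax core imputation: its decreasing sorted list of
profits of essential vertices is lexicographically smallest over the core. -/
def IsLeximax {U V : Type*} [Fintype U] [Fintype V] [DecidableEq U] [DecidableEq V]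
    (E : Finset (U × V)) (w : U × V → ℚ) (u : U → ℚ) (v : V → ℚ) : Prop :=
  InCore E w u v ∧ ∀ u' v', InCore E w u' v' →
    profitListDec E w u v = profitListDec E w u' v' ∨
      List.Lex (· < ·) (profitListDec E w u v) (profitListDec E w u' v')

/-- The concrete example: edges `(u1,v1)` of weight 70, `(u1,v2)` of weight
110, `(u2,v2)` of weight 100. -/
def Ex : Finset (Fin 2 × Fin 2) := {((0 : Fin 2), (0 : Fin 2)), (0, 1), (1, 1)}

def wEx : Fin 2 × Fin 2 → ℚ := fun e =>
  if e = ((0 : Fin 2), (0 : Fin 2)) then 70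
  else if e = (0, 1) then 110
  else if e = (1, 1) then 100
  else 0

section Aux

lemma sort_eq_of (s : Multiset ℚ) (l : List ℚ) (hl : l.Pairwise (· ≤ ·))
    (h : (l : Multiset ℚ) = s) : s.sort (· ≤ ·) = l := by
  apply List.Perm.eq_of_pairwise' (Multiset.pairwise_sort s _) hl
  rw [← Multiset.coe_eq_coe, Multiset.sort_eq, ← h]

lemma lex_of_small {s : Multiset ℚ} {x c : ℚ} (hx : x ∈ s) (hxc : x < c) (rest : List ℚ) :
    List.Lex (· < ·) (Multiset.sort s (· ≤ ·)) (c :: rest) := by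
  have hmem : x ∈ Multiset.sort s (· ≤ ·) := by rw [Multiset.mem_sort]; exact hx
  have hs : (Multiset.sort s (· ≤ ·)).Pairwise (· ≤ ·) := Multiset.pairwise_sort _ _
  cases h : Multiset.sort s (· ≤ ·) with
  | nil => rw [h] at hmem; simp at hmem
  | cons a t =>
    rw [h] at hmem hs
    have hax : a ≤ x := by
      rcases List.mem_cons.1 hmem with rfl | hx'
      · exact le_refl _
      · exact (List.pairwise_cons.1 hs).1 x hx'
    exact List.Lex.rel (lt_of_le_of_lt hax hxc)

lemma lex_of_big {s : Multiset ℚ} {x c : ℚ} (hx : x ∈ s) (hxc : c < x) (rest : List ℚ) :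
    List.Lex (· < ·) (c :: rest) (Multiset.sort s (· ≤ ·)).reverse := by
  have hmem : x ∈ (Multiset.sort s (· ≤ ·)).reverse := by
    rw [List.mem_reverse, Multiset.mem_sort]; exact hx
  have hs : (Multiset.sort s (· ≤ ·)).reverse.Pairwise (fun a b => b ≤ a) := by
    rw [List.pairwise_reverse]; exact Multiset.pairwise_sort _ _
  cases h : (Multiset.sort s (· ≤ ·)).reverse with
  | nil => rw [h] at hmem; simp at hmem
  | cons a t =>
    rw [h] at hmem hs
    have hax : x ≤ a := by
      rcases List.mem_cons.1 hmem with rfl | hx'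
      · exact le_refl _
      · exact (List.pairwise_cons.1 hs).1 x hx'
    exact List.Lex.rel (lt_of_lt_of_le hxc hax)

end Aux

def instDecIsMatchingEx (M : Finset (Fin 2 × Fin 2)) : Decidable (IsMatching Ex M) :=
  decidable_of_iff (M ⊆ Ex ∧ (∀ e ∈ M, ∀ e' ∈ M, e.1 = e'.1 → e = e') ∧
    (∀ e ∈ M, ∀ e' ∈ M, e.2 = e'.2 → e = e')) Iff.rfl

def MSet : Finset (Finset (Fin 2 × Fin 2)) :=
  {∅, {((0:Fin 2),(0:Fin 2))}, {(0,1)}, {(1,1)}, {(0,0),(1,1)}}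

section DecideZone
attribute [local instance] instDecIsMatchingEx

lemma matching_mem (M : Finset (Fin 2 × Fin 2)) (h : IsMatching Ex M) : M ∈ MSet := by
  revert h
  revert M
  decide

lemma isMatching_diag :
    IsMatching Ex ({((0:Fin 2),(0:Fin 2)),(1,1)} : Finset (Fin 2 × Fin 2)) := by decide

end DecideZone

lemma weight_diag :
    matchWeight wEx ({((0:Fin 2),(0:Fin 2)),(1,1)} : Finset (Fin 2 × Fin 2)) = 170 := by
  norm_num [matchWeight, wEx, Prod.ext_iff, Finset.sum_insert, Finset.sum_singleton]

lemma maxWeight_ex : maxWeight Ex wEx = 170 := by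
  unfold maxWeight
  apply le_antisymm
  · apply Finset.sup'_le
    intro M hM
    rw [Finset.mem_filter] at hM
    have hmem := matching_mem M hM.2
    fin_cases hmem <;> norm_num [matchWeight, wEx, Prod.ext_iff]
  · have hmem : ({((0:Fin 2),(0:Fin 2)),(1,1)} : Finset (Fin 2 × Fin 2)) ∈
        Ex.powerset.filter (fun M => IsMatching Ex M) := by
      rw [Finset.mem_filter, Finset.mem_powerset]
      exact ⟨isMatching_diag.1, isMatching_diag⟩
    exact weight_diag ▸ Finset.le_sup' (matchWeight wEx) hmem

lemma maxMatching_iff (M : Finset (Fin 2 × Fin 2)) :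
    IsMaxMatching Ex wEx M ↔ M = ({((0:Fin 2),(0:Fin 2)), (1,1)} : Finset (Fin 2 × Fin 2)) := by
  constructor
  · rintro ⟨hm, hw⟩
    rw [maxWeight_ex] at hw
    have hmem := matching_mem M hm
    fin_cases hmem <;> first
      | rfl
      | (exfalso; revert hw; norm_num [matchWeight, wEx, Prod.ext_iff])
  · rintro rfl
    exact ⟨isMatching_diag, by rw [maxWeight_ex, weight_diag]⟩

lemma essential_all (q : Fin 2 ⊕ Fin 2) : EssentialVertex Ex wEx q := by
  intro M hM
  rw [maxMatching_iff] at hM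
  subst hM
  rcases q with i | j
  · fin_cases i
    · exact ⟨0, by decide⟩
    · exact ⟨1, by decide⟩
  · fin_cases j
    · exact ⟨0, by decide⟩
    · exact ⟨1, by decide⟩

lemma filter_essential :
    Finset.univ.filter (fun q : Fin 2 ⊕ Fin 2 => EssentialVertex Ex wEx q) = Finset.univ :=
  Finset.filter_true_of_mem (fun q _ => essential_all q)

lemma profitInc_eq (u v : Fin 2 → ℚ) :
    profitListInc Ex wEx u v = Multiset.sort {u 0, u 1, v 0, v 1} (· ≤ ·) := by
  unfold profitListInc
  rw [filter_essential]
  congr 1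

lemma core_facts {u v : Fin 2 → ℚ} (h : InCore Ex wEx u v) :
    0 ≤ u 0 ∧ 0 ≤ u 1 ∧ 0 ≤ v 0 ∧ 0 ≤ v 1 ∧
      u 0 + v 0 = 70 ∧ u 1 + v 1 = 100 ∧ 110 ≤ u 0 + v 1 := by
  obtain ⟨hu, hv, he, hsum⟩ := h
  rw [maxWeight_ex, Fin.sum_univ_two, Fin.sum_univ_two] at hsum
  have h1 := he (0,0) (by decide)
  have h2 := he (0,1) (by decide)
  have h3 := he (1,1) (by decide)
  norm_num [wEx, Prod.ext_iff] at h1 h2 h3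
  exact ⟨hu 0, hu 1, hv 0, hv 1, by linarith, by linarith, by linarith⟩
lemma sort_ours_min : Multiset.sort ({40,30,30,70} : Multiset ℚ) (· ≤ ·) = [30,30,40,70] :=
  sort_eq_of _ _ (by decide) (by decide)

lemma sort_ours_max : Multiset.sort ({55,45,15,55} : Multiset ℚ) (· ≤ ·) = [15,45,55,55] :=
  sort_eq_of _ _ (by decide) (by decide)

lemma inCore_min : InCore Ex wEx ![40, 30] ![30, 70] := by
  refine ⟨?_, ?_, ?_, ?_⟩
  · intro i; fin_cases i <;> norm_num
  · intro j; fin_cases j <;> norm_num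
  · intro e he; fin_cases he <;> norm_num [wEx, Prod.ext_iff]
  · rw [Fin.sum_univ_two, Fin.sum_univ_two, maxWeight_ex]; norm_num

lemma inCore_max : InCore Ex wEx ![55, 45] ![15, 55] := by
  refine ⟨?_, ?_, ?_, ?_⟩
  · intro i; fin_cases i <;> norm_num
  · intro j; fin_cases j <;> norm_num
  · intro e he; fin_cases he <;> norm_num [wEx, Prod.ext_iff]
  · rw [Fin.sum_univ_two, Fin.sum_univ_two, maxWeight_ex]; norm_num

/-- In the example, `{(u1,v1), (u2,v2)}` is the maximum weight matching, the
leximin core imputation is `(40, 30, 30, 70)`, the leximax core imputation is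
`(55, 45, 15, 55)`, and the two differ. -/
theorem leximin_ne_leximax_example :
    IsMaxMatching Ex wEx {((0 : Fin 2), (0 : Fin 2)), (1, 1)} ∧
      IsLeximin Ex wEx ![40, 30] ![30, 70] ∧
      IsLeximax Ex wEx ![55, 45] ![15, 55] ∧
      ((![40, 30] : Fin 2 → ℚ) ≠ ![55, 45] ∨
        (![30, 70] : Fin 2 → ℚ) ≠ ![15, 55]) := by
  refine ⟨(maxMatching_iff _).2 rfl, ⟨inCore_min, ?_⟩, ⟨inCore_max, ?_⟩, ?_⟩
  · -- leximin
    intro u' v' h'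
    obtain ⟨h0, h1, h2, h3, e1, e2, e3⟩ := core_facts h'
    rw [profitInc_eq, profitInc_eq]
    simp only [Matrix.cons_val_zero, Matrix.cons_val_one, Matrix.head_cons]
    rw [sort_ours_min]
    by_cases hc : 30 ≤ u' 1 ∧ 30 ≤ v' 0
    · left
      obtain ⟨hc1, hc2⟩ := hc
      have hu0 : u' 0 = 40 := by linarith
      have hu1 : u' 1 = 30 := by linarith
      have hv0 : v' 0 = 30 := by linarith
      have hv1 : v' 1 = 70 := by linarith
      rw [hu0, hu1, hv0, hv1, sort_ours_min]
    · right
      rcases not_and_or.mp hc with hlt | hlt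
      · push_neg at hlt
        exact lex_of_small (x := u' 1) (by simp) hlt _
      · push_neg at hlt
        exact lex_of_small (x := v' 0) (by simp) hlt _
  · -- leximax
    intro u' v' h'
    obtain ⟨h0, h1, h2, h3, e1, e2, e3⟩ := core_facts h'
    unfold profitListDec
    rw [profitInc_eq, profitInc_eq]
    simp only [Matrix.cons_val_zero, Matrix.cons_val_one, Matrix.head_cons]
    rw [sort_ours_max]
    by_cases hc : u' 0 ≤ 55 ∧ v' 1 ≤ 55
    · left
      obtain ⟨hc1, hc2⟩ := hc
      have hu0 : u' 0 = 55 := by linarith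
      have hv1 : v' 1 = 55 := by linarith
      have hu1 : u' 1 = 45 := by linarith
      have hv0 : v' 0 = 15 := by linarith
      rw [hu0, hu1, hv0, hv1, sort_ours_max]
    · right
      have hrev : ([15, 45, 55, 55] : List ℚ).reverse = [55, 55, 45, 15] := by decide
      rw [hrev]
      rcases not_and_or.mp hc with hlt | hlt
      · push_neg at hlt
        exact lex_of_big (x := u' 0) (by simp) hlt _
      · push_neg at hlt
        exact lex_of_big (x := v' 1) (by simp) hlt _
  · left
    intro h
    have := congrFun h 0
    norm_num [Matrix.cons_val_zero] at this
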